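/- arXiv:2011.10564 — 3 statements merged into one kernel-verified Lean document; each statement's English description precedes it below -/
import Mathlib

section
/- Williamson's theorem: For every positive definite real (2n)×(2n) matrix M there exist a real symplectic matrix S (i.e. Sᵀ Ω S = Ω) and a diagonal real n×n matrix Λ with strictly positive diagonal entries such that Sᵀ M S equals the block-diagonal matrix diag(Λ, Λ) (upper-left block Λ, lower-right block Λ, off-diagonal blocks zero). -/
open Matrix

/-- The standard `(2n)×(2n)` symplectic form `Ω = [[0, Iₙ], [−Iₙ, 0]]`. -/
def symplecticForm (n : ℕ) : Matrix (Fin n ⊕ Fin n) (Fin n ⊕ Fin n) ℝ :=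
  Matrix.fromBlocks 0 1 (-1) 0

open Module

local notation "⟪" x ", " y "⟫" => @inner ℝ _ _ x y

theorem skew_normal_form : ∀ (m : ℕ) (E : Type) [NormedAddCommGroup E]
    [InnerProductSpace ℝ E] [FiniteDimensional ℝ E], finrank ℝ E = m →
    ∀ K : E →ₗ[ℝ] E, (∀ x y : E, ⟪K x, y⟫ = -⟪x, K y⟫) → Function.Injective K →
    ∃ (N : ℕ) (d : Fin N → ℝ) (b : OrthonormalBasis (Fin N ⊕ Fin N) ℝ E),
      m = 2 * N ∧ (∀ i, 0 < d i) ∧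
      (∀ i, K (b (Sum.inl i)) = -(d i • b (Sum.inr i))) ∧
      (∀ i, K (b (Sum.inr i)) = d i • b (Sum.inl i)) := by
  intro m
  induction m using Nat.strong_induction_on with
  | _ m ih =>
    intro E _ _ _ hdim K hskew hinj
    rcases Nat.eq_zero_or_pos m with hm | hm
    · -- trivial case
      subst hm
      have hsub : Subsingleton E := finrank_zero_iff.mp hdim
      refine ⟨0, Fin.elim0, ?_, by ring, fun i => i.elim0, fun i => i.elim0, fun i => i.elim0⟩
      refine OrthonormalBasis.mk (v := fun _ => (0:E)) ⟨fun i => isEmptyElim i, fun i => isEmptyElim i⟩ ?_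
      intro x _
      have : x = 0 := Subsingleton.elim x 0
      simp [this]
    · have hnt : Nontrivial E := finrank_pos_iff.mp (hdim ▸ hm)
      -- the symmetric operator K ∘ K has an eigenvalue
      set T : E →ₗ[ℝ] E := K ∘ₗ K with hT
      have hTsym : T.IsSymmetric := by
        intro x y
        simp only [hT, LinearMap.comp_apply]
        rw [hskew, hskew, neg_neg]
      obtain ⟨μ, hμ⟩ : ∃ μ : ℝ, Module.End.HasEigenvalue T μ :=
        ⟨_, hTsym.hasEigenvalue_iSup_of_finiteDimensional⟩
      obtain ⟨x, hx⟩ := hμ.exists_hasEigenvector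
      have hx0 : x ≠ 0 := hx.2
      have hTx : T x = μ • x := hx.apply_eq_smul
      have hKx0 : K x ≠ 0 := fun h => hx0 (hinj (by rw [h, map_zero]))
      have hμneg : μ < 0 := by
        have h1 : ⟪T x, x⟫ = μ * ⟪x, x⟫ := by rw [hTx, real_inner_smul_left]
        have h2 : ⟪T x, x⟫ = -⟪K x, K x⟫ := by
          simp only [hT, LinearMap.comp_apply]; rw [hskew]
        have h3 : (0:ℝ) < ⟪x, x⟫ := by
          rw [real_inner_self_eq_norm_sq]
          have := norm_pos_iff.mpr hx0
          positivity
        have h4 : (0:ℝ) < ⟪K x, K x⟫ := by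
          rw [real_inner_self_eq_norm_sq]
          have := norm_pos_iff.mpr hKx0
          positivity
        nlinarith
      set d0 : ℝ := Real.sqrt (-μ) with hd0def
      have hd0 : 0 < d0 := Real.sqrt_pos.mpr (by linarith)
      have hd0sq : d0 ^ 2 = -μ := Real.sq_sqrt (by linarith)
      -- the orthonormal pair u, v
      set u : E := (‖x‖⁻¹ : ℝ) • x with hudef
      have hu1 : ‖u‖ = 1 := norm_smul_inv_norm hx0
      have huu : ⟪u, u⟫ = 1 := by
        rw [real_inner_self_eq_norm_sq, hu1]; norm_num
      have hKKu : K (K u) = μ • u := by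
        have : T u = μ • u := by
          rw [hudef, T.map_smul, hTx, smul_comm]
        simpa only [hT, LinearMap.comp_apply] using this
      have hKu0 : K u ≠ 0 := by
        intro h
        have : u = 0 := hinj (by rw [h, map_zero])
        rw [this] at hu1; simp at hu1
      set v : E := (d0⁻¹ : ℝ) • K u with hvdef
      have hKu : K u = d0 • v := by
        rw [hvdef, smul_smul, mul_inv_cancel₀ hd0.ne', one_smul]
      have hKv : K v = -(d0 • u) := by
        rw [hvdef, K.map_smul, hKKu, smul_smul]
        have hc : d0⁻¹ * μ = -d0 := by
          rw [show μ = -(d0^2) by rw [hd0sq]; ring]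
          field_simp
        rw [hc, neg_smul]
      have huKu : ⟪u, K u⟫ = 0 := by
        have := hskew u u
        have h2 : ⟪K u, u⟫ = ⟪u, K u⟫ := real_inner_comm _ _
        linarith
      have huv : ⟪u, v⟫ = 0 := by
        rw [hvdef, real_inner_smul_right, huKu, mul_zero]
      have hKuKu : ⟪K u, K u⟫ = -μ := by
        rw [hskew u (K u), hKKu, real_inner_smul_right, huu]; ring
      have hvv : ⟪v, v⟫ = 1 := by
        rw [hvdef, real_inner_smul_left, real_inner_smul_right, hKuKu, ← hd0sq]
        field_simp
      have hv1 : ‖v‖ = 1 := by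
        rw [← pow_left_inj₀ (norm_nonneg v) zero_le_one two_ne_zero]
        rw [← real_inner_self_eq_norm_sq, hvv]; norm_num
      -- the orthonormal pair as a family
      have hvu : ⟪v, u⟫ = 0 := by rw [real_inner_comm]; exact huv
      set f : Fin 2 → E := ![u, v] with hfdef
      have horthf : Orthonormal ℝ f := by
        rw [orthonormal_iff_ite]
        intro i j
        fin_cases i <;> fin_cases j <;>
          simp [hfdef, huu, hvv, huv, hvu, hu1, hv1]
      set V : Submodule ℝ E := Submodule.span ℝ (Set.range f) with hVdef
      have huV : u ∈ V := Submodule.subset_span ⟨0, rfl⟩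
      have hvV : v ∈ V := Submodule.subset_span ⟨1, rfl⟩
      set W : Submodule ℝ E := Vᗮ with hWdef
      have hVrank : finrank ℝ V = 2 := by
        rw [hVdef, finrank_span_eq_card horthf.linearIndependent]
        simp
      have hWrank : 2 + finrank ℝ W = m := by
        rw [← hVrank, ← hdim]
        exact Submodule.finrank_add_finrank_orthogonal V
      -- orthogonality against members of W
      have hWu : ∀ w : W, ⟪u, (w : E)⟫ = 0 := fun w =>
        Submodule.inner_right_of_mem_orthogonal huV w.2
      have hWv : ∀ w : W, ⟪v, (w : E)⟫ = 0 := fun w =>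
        Submodule.inner_right_of_mem_orthogonal hvV w.2
      -- K-invariance of W
      have hKW : ∀ w ∈ W, K w ∈ W := by
        intro w hw
        rw [hWdef, Submodule.mem_orthogonal]
        intro z hz
        induction hz using Submodule.span_induction with
        | mem z hzm =>
          obtain ⟨i, rfl⟩ := hzm
          fin_cases i
          · show ⟪u, K w⟫ = 0
            have h1 : ⟪K u, w⟫ = -⟪u, K w⟫ := hskew u w
            have h2 : ⟪K u, w⟫ = 0 := by
              rw [hKu, real_inner_smul_left, Submodule.inner_right_of_mem_orthogonal hvV hw, mul_zero]
            linarith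
          · show ⟪v, K w⟫ = 0
            have h1 : ⟪K v, w⟫ = -⟪v, K w⟫ := hskew v w
            have h2 : ⟪K v, w⟫ = 0 := by
              rw [hKv, inner_neg_left, real_inner_smul_left,
                 Submodule.inner_right_of_mem_orthogonal huV hw, mul_zero, neg_zero]
            linarith
        | zero => simp
        | add a c ha hc iha ihc => rw [inner_add_left, iha, ihc, add_zero]
        | smul r a ha iha => rw [real_inner_smul_left, iha, mul_zero]
      -- restrict K to W and apply the induction hypothesis
      set K' : W →ₗ[ℝ] W := K.restrict hKW with hK'def
      have hK'coe : ∀ w : W, (K' w : E) = K w := fun w => rfl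
      have hskew' : ∀ a c : W, ⟪K' a, c⟫ = -⟪a, K' c⟫ := by
        intro a c
        rw [Submodule.coe_inner, Submodule.coe_inner, hK'coe, hK'coe]
        exact hskew a c
      have hinj' : Function.Injective K' := by
        intro a c h
        refine Subtype.ext (hinj ?_)
        have := congrArg Subtype.val h
        rwa [hK'coe, hK'coe] at this
      obtain ⟨N', d', b', hNW, hd', hbl', hbr'⟩ :=
        ih (finrank ℝ W) (by omega) W rfl K' hskew' hinj'
      -- assemble the new basis
      set dd : Fin (N' + 1) → ℝ := Fin.cases d0 d' with hdd
      set g : Fin (N' + 1) ⊕ Fin (N' + 1) → E :=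
        Sum.elim (Fin.cases v fun j => (b' (Sum.inl j) : E))
                 (Fin.cases u fun j => (b' (Sum.inr j) : E)) with hg
      have hbnorm : ∀ a, ‖(b' a : E)‖ = 1 := fun a => by
        rw [Submodule.norm_coe]; exact b'.orthonormal.1 a
      have hbinner : ∀ a c, ⟪(b' a : E), (b' c : E)⟫ = if a = c then 1 else 0 := by
        intro a c
        rw [← Submodule.coe_inner]
        exact orthonormal_iff_ite.mp b'.orthonormal a c
      have hub : ∀ a, ⟪u, (b' a : E)⟫ = 0 := fun a =>
        Submodule.inner_right_of_mem_orthogonal huV (b' a).2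
      have hvb : ∀ a, ⟪v, (b' a : E)⟫ = 0 := fun a =>
        Submodule.inner_right_of_mem_orthogonal hvV (b' a).2
      have hbu : ∀ a, ⟪(b' a : E), u⟫ = 0 := fun a => by
        rw [real_inner_comm]; exact hub a
      have hbv : ∀ a, ⟪(b' a : E), v⟫ = 0 := fun a => by
        rw [real_inner_comm]; exact hvb a
      have horthg : Orthonormal ℝ g := by
        rw [orthonormal_iff_ite]
        rintro (i | i) (j | j) <;>
          [skip; skip; skip; skip] <;>
        · induction i using Fin.cases with
          | zero =>
            induction j using Fin.cases with
            | zero => simp [hg, huu, hvv, huv, hvu, hu1, hv1]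
            | succ j => simp [hg, hub, hvb, (Fin.succ_ne_zero j).symm]
          | succ i =>
            induction j using Fin.cases with
            | zero => simp [hg, hbu, hbv, Fin.succ_ne_zero]
            | succ j => simp [hg, hbinner, Fin.succ_inj]
      have hcard : Fintype.card (Fin (N' + 1) ⊕ Fin (N' + 1)) = finrank ℝ E := by
        rw [Fintype.card_sum, Fintype.card_fin, hdim]; omega
      have hspan := LinearIndependent.span_eq_top_of_card_eq_finrank
        horthg.linearIndependent hcard
      refine ⟨N' + 1, dd, OrthonormalBasis.mk horthg hspan.ge, by omega, ?_, ?_, ?_⟩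
      · intro i
        induction i using Fin.cases with
        | zero => simpa [hdd] using hd0
        | succ j => simpa [hdd] using hd' j
      · intro i
        rw [OrthonormalBasis.coe_mk]
        induction i using Fin.cases with
        | zero => simpa [hg, hdd] using hKv
        | succ j =>
          have h := congrArg Subtype.val (hbl' j)
          rw [hK'coe] at h
          simpa [hg, hdd] using h
      · intro i
        rw [OrthonormalBasis.coe_mk]
        induction i using Fin.cases with
        | zero => simpa [hg, hdd] using hKu
        | succ j =>
          have h := congrArg Subtype.val (hbr' j)
          rw [hK'coe] at h
          simpa [hg, hdd] using h

lemma euclid_real_inner {ι : Type} [Fintype ι] (x y : EuclideanSpace ℝ ι) :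
    ⟪x, y⟫ = ∑ i, x i * y i := by
  simp [PiLp.inner_apply, RCLike.inner_apply, mul_comm]

theorem skew_matrix_normal_form (n : ℕ) (K : Matrix (Fin n ⊕ Fin n) (Fin n ⊕ Fin n) ℝ)
    (hskew : Kᵀ = -K) (hdet : IsUnit K) :
    ∃ (Q : Matrix (Fin n ⊕ Fin n) (Fin n ⊕ Fin n) ℝ) (d : Fin n → ℝ),
      Qᵀ * Q = 1 ∧ (∀ i, 0 < d i) ∧
      Qᵀ * K * Q = fromBlocks 0 (diagonal d) (-(diagonal d)) 0 := by
  classical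
  set E : Type := EuclideanSpace ℝ (Fin n ⊕ Fin n) with hE
  set KL : E →ₗ[ℝ] E := Matrix.toEuclideanLin K with hKL
  have hKLapp : ∀ (x : E), ⇑(KL x) = K *ᵥ (fun j => x j) := fun x => rfl
  have hskewL : ∀ x y : E, ⟪KL x, y⟫ = -⟪x, KL y⟫ := by
    intro x y
    rw [euclid_real_inner, euclid_real_inner]
    show (K *ᵥ (fun j => x j)) ⬝ᵥ (fun j => y j) = -((fun j => x j) ⬝ᵥ (K *ᵥ fun j => y j))
    rw [dotProduct_comm, Matrix.dotProduct_mulVec, ← Matrix.mulVec_transpose,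
      hskew, Matrix.neg_mulVec, neg_dotProduct, dotProduct_comm]
  have hinjL : Function.Injective KL := by
    have h := Matrix.mulVec_injective_iff_isUnit.mpr hdet
    intro x y hxy
    have h2 : K *ᵥ (fun j => x j) = K *ᵥ (fun j => y j) := by
      rw [← hKLapp, ← hKLapp, hxy]
    have h3 := h h2
    exact PiLp.ext fun i => congrFun h3 i
  obtain ⟨N, dd, b, hmN, hddpos, hbl, hbr⟩ :=
    skew_normal_form (finrank ℝ E) E rfl KL hskewL hinjL
  have hNn : N = n := by
    have h2 : finrank ℝ E = 2 * n := by
      show finrank ℝ (EuclideanSpace ℝ (Fin n ⊕ Fin n)) = 2 * n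
      rw [finrank_euclideanSpace, Fintype.card_sum, Fintype.card_fin]; ring
    omega
  subst hNn
  refine ⟨Matrix.of fun j k => b k j, dd, ?_, hddpos, ?_⟩
  · ext j k
    have : (∑ l, b j l * b k l) = if j = k then 1 else 0 := by
      have h5 := orthonormal_iff_ite.mp b.orthonormal j k
      rw [euclid_real_inner] at h5
      exact h5
    simpa [Matrix.mul_apply, Matrix.one_apply] using this
  · have key : ∀ j k, ((Matrix.of fun j k => b k j)ᵀ * K * (Matrix.of fun j k => b k j)) j k
        = ⟪b j, KL (b k)⟫ := by
      intro j k
      rw [Matrix.mul_assoc, Matrix.mul_apply, euclid_real_inner]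
      refine Finset.sum_congr rfl fun l _ => ?_
      rfl
    ext j k
    rw [key]
    rcases j with i | i <;> rcases k with i' | i'
    · rw [hbl i', inner_neg_right, real_inner_smul_right,
        orthonormal_iff_ite.mp b.orthonormal]
      simp [Matrix.fromBlocks]
    · rw [hbr i', real_inner_smul_right, orthonormal_iff_ite.mp b.orthonormal]
      simp only [Matrix.fromBlocks, Matrix.diagonal, Sum.elim_inl, Sum.elim_inr,
        Matrix.of_apply, Sum.inl.injEq]
      rcases eq_or_ne i i' with h | h <;> simp [h]
    · rw [hbl i', inner_neg_right, real_inner_smul_right,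
        orthonormal_iff_ite.mp b.orthonormal]
      simp only [Matrix.fromBlocks, Matrix.diagonal, Sum.elim_inl, Sum.elim_inr,
        Matrix.of_apply, Sum.inr.injEq, Matrix.neg_apply]
      rcases eq_or_ne i i' with h | h <;> simp [h]
    · rw [hbr i', real_inner_smul_right, orthonormal_iff_ite.mp b.orthonormal]
      simp [Matrix.fromBlocks]

/-- **Williamson's theorem**: every positive definite real `(2n)×(2n)` matrix `M` can be
brought to the form `diag(Λ, Λ)` with `Λ` diagonal with positive entries, by a congruence
`Sᵀ M S` with `S` symplectic. -/
theorem williamson (n : ℕ) (M : Matrix (Fin n ⊕ Fin n) (Fin n ⊕ Fin n) ℝ) (hM : M.PosDef) :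
    ∃ (S : Matrix (Fin n ⊕ Fin n) (Fin n ⊕ Fin n) ℝ) (Λ : Matrix (Fin n) (Fin n) ℝ),
      Sᵀ * symplecticForm n * S = symplecticForm n ∧
      Λ.IsDiag ∧ (∀ i, 0 < Λ i i) ∧
      Sᵀ * M * S = Matrix.fromBlocks Λ 0 0 Λ := by
  classical
  have hMps := hM.posSemidef
  open scoped MatrixOrder in
  set B := CFC.sqrt M with hB
  have hBps : B.PosSemidef := by
    open scoped MatrixOrder in
    exact Matrix.nonneg_iff_posSemidef.mp (CFC.sqrt_nonneg M)
  have hBsym : Bᵀ = B := by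
    have h := hBps.isHermitian
    ext i j
    have h2 := congrFun (congrFun h i) j
    simpa [Matrix.conjTranspose_apply] using h2
  have hBB : B * B = M := by
    open scoped MatrixOrder in
    exact CFC.sqrt_mul_sqrt_self M hMps.nonneg
  have hBdet : IsUnit B.det := by
    have hd : B.det * B.det = M.det := by rw [← Matrix.det_mul, hBB]
    have hMd := hM.det_pos
    refine isUnit_iff_ne_zero.mpr fun h => ?_
    rw [h, mul_zero] at hd
    exact absurd hd.symm (ne_of_gt hMd)
  have hBinv : B * B⁻¹ = 1 := Matrix.mul_nonsing_inv B hBdet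
  have hBinv' : B⁻¹ * B = 1 := Matrix.nonsing_inv_mul B hBdet
  have hBiu : IsUnit (B⁻¹) :=
    (Matrix.isUnit_iff_isUnit_det _).mpr (Matrix.isUnit_nonsing_inv_det B hBdet)
  have hΩmul : symplecticForm n * (-(symplecticForm n)) = 1 := by
    rw [symplecticForm, Matrix.fromBlocks_neg, Matrix.fromBlocks_multiply]
    simp [← Matrix.fromBlocks_one]
  have hΩu : IsUnit (symplecticForm n) := by
    refine (Matrix.isUnit_iff_isUnit_det _).mpr (IsUnit.of_mul_eq_one (-(symplecticForm n)).det ?_)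
    rw [← Matrix.det_mul, hΩmul, Matrix.det_one]
  have hΩT : (symplecticForm n)ᵀ = -(symplecticForm n) := by
    rw [symplecticForm, Matrix.fromBlocks_transpose, Matrix.fromBlocks_neg]
    simp
  have hBiT : (B⁻¹)ᵀ = B⁻¹ := by rw [Matrix.transpose_nonsing_inv, hBsym]
  have hKskew : (B⁻¹ * symplecticForm n * B⁻¹)ᵀ = -(B⁻¹ * symplecticForm n * B⁻¹) := by
    rw [Matrix.transpose_mul, Matrix.transpose_mul, hBiT, hΩT]
    simp [Matrix.mul_assoc]
  have hKu : IsUnit (B⁻¹ * symplecticForm n * B⁻¹) := (hBiu.mul hΩu).mul hBiu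
  obtain ⟨Q, d, hQ, hdpos, hQKQ⟩ := skew_matrix_normal_form n _ hKskew hKu
  set e : Fin n → ℝ := fun i => (Real.sqrt (d i))⁻¹ with he
  set F : Matrix (Fin n ⊕ Fin n) (Fin n ⊕ Fin n) ℝ :=
    fromBlocks (diagonal e) 0 0 (diagonal e) with hF
  set S := B⁻¹ * Q * F with hS
  have hFT : Fᵀ = F := by
    rw [hF, Matrix.fromBlocks_transpose]
    simp
  have hST : Sᵀ = F * Qᵀ * B⁻¹ := by
    rw [hS, Matrix.transpose_mul, Matrix.transpose_mul, hFT, hBiT, Matrix.mul_assoc]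
  have key : ∀ X : Matrix (Fin n ⊕ Fin n) (Fin n ⊕ Fin n) ℝ,
      Sᵀ * X * S = F * ((Qᵀ * (B⁻¹ * X * B⁻¹)) * Q) * F := by
    intro X
    rw [hST, hS]
    simp only [Matrix.mul_assoc]
  have hsqrtd : ∀ i, e i * (d i * e i) = 1 := by
    intro i
    rw [he]
    have h1 : Real.sqrt (d i) * Real.sqrt (d i) = d i :=
      Real.mul_self_sqrt (le_of_lt (hdpos i))
    have h2 : Real.sqrt (d i) ≠ 0 := by
      have := Real.sqrt_pos.mpr (hdpos i)
      positivity
    rw [← h1]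
    field_simp
  have hEDE : diagonal e * (diagonal d * diagonal e) = 1 := by
    have h3 : (fun i => e i * (d i * e i)) = fun _ => (1:ℝ) := funext hsqrtd
    rw [Matrix.diagonal_mul_diagonal, Matrix.diagonal_mul_diagonal, h3, Matrix.diagonal_one]
  have hEE : diagonal e * diagonal e = diagonal (fun i => (d i)⁻¹) := by
    have h3 : (fun i => e i * e i) = fun i => (d i)⁻¹ := by
      funext i
      rw [he, ← mul_inv, Real.mul_self_sqrt (le_of_lt (hdpos i))]
    rw [Matrix.diagonal_mul_diagonal, h3]
  have hBMB : B⁻¹ * M * B⁻¹ = 1 := by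
    rw [← hBB]
    calc B⁻¹ * (B * B) * B⁻¹ = (B⁻¹ * B) * (B * B⁻¹) := by
          simp only [Matrix.mul_assoc]
      _ = 1 := by rw [hBinv', hBinv, Matrix.one_mul]
  refine ⟨S, diagonal (fun i => (d i)⁻¹), ?_, Matrix.isDiag_diagonal _,
      fun i => by simp [inv_pos.mpr (hdpos i)], ?_⟩
  · rw [key, hQKQ, hF]
    rw [Matrix.fromBlocks_multiply, Matrix.fromBlocks_multiply]
    simp only [Matrix.mul_zero, Matrix.zero_mul, Matrix.mul_one, Matrix.one_mul,
      add_zero, zero_add, Matrix.mul_neg, Matrix.neg_mul]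
    rw [symplecticForm, Matrix.mul_assoc (diagonal e), hEDE, neg_zero]
  · rw [key, hBMB, Matrix.mul_one, hQ, Matrix.mul_one, hF,
      Matrix.fromBlocks_multiply]
    simp only [Matrix.mul_zero, Matrix.zero_mul, add_zero, zero_add]
    rw [hEE]
end

section
/- Block-diagonal Williamson theorem: If M is a positive definite real (2n)×(2n) matrix that is block diagonal with two n×n blocks, M = diag(A, B), then there exist an invertible real n×n matrix Sₙ and a diagonal real n×n matrix Λ with strictly positive diagonal entries such that the block-diagonal matrix S = diag(Sₙ, (Sₙᵀ)⁻¹) is symplectic (Sᵀ Ω S = Ω) and Sᵀ M S = diag(Λ, Λ). -/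
open Matrix

private lemma posDef_conj_aux {n : ℕ} {N P : Matrix (Fin n) (Fin n) ℝ}
    (hN : N.PosDef) (hP : IsUnit P) : (Pᵀ * N * P).PosDef := by
  have hP' : Function.Injective P.mulVec := mulVec_injective_iff_isUnit.mpr hP
  refine PosDef.of_dotProduct_mulVec_pos ?_ ?_
  · have h := Matrix.isHermitian_conjTranspose_mul_mul P hN.1
    simpa [conjTranspose_eq_transpose_of_trivial] using h
  · intro x hx
    have hPx : P *ᵥ x ≠ 0 := fun h => hx (hP' (by simpa using h))
    have h := hN.dotProduct_mulVec_pos hPx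
    have hsx : ∀ v : Fin n → ℝ, star v = v := fun v => funext fun i => star_trivial _
    rw [hsx] at h ⊢
    have key : x ⬝ᵥ (Pᵀ * N * P) *ᵥ x = (P *ᵥ x) ⬝ᵥ N *ᵥ (P *ᵥ x) := by
      rw [← mulVec_mulVec, ← mulVec_mulVec, dotProduct_mulVec, vecMul_transpose]
    rw [key]
    exact h

open scoped MatrixOrder in
private lemma sqrt_aux {n : ℕ} (A : Matrix (Fin n) (Fin n) ℝ) (hA : A.PosSemidef) :
    ∃ L : Matrix (Fin n) (Fin n) ℝ, L * L = A ∧ Lᴴ = L :=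
  ⟨CFC.sqrt A, CFC.sqrt_mul_sqrt_self A hA.nonneg, (CFC.sqrt_nonneg A).posSemidef.1⟩

/-- **Block-diagonal Williamson theorem**: if `M = diag(A, B)` is positive definite, the
symplectic matrix in Williamson's theorem can be chosen block diagonal, of the form
`S = diag(Sₙ, (Sₙᵀ)⁻¹)` with `Sₙ` invertible. -/
theorem williamson_blockDiagonal (n : ℕ) (A B : Matrix (Fin n) (Fin n) ℝ)
    (M : Matrix (Fin n ⊕ Fin n) (Fin n ⊕ Fin n) ℝ)
    (hMdef : M = Matrix.fromBlocks A 0 0 B) (hM : M.PosDef) :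
    ∃ (Sn : Matrix (Fin n) (Fin n) ℝ) (Λ : Matrix (Fin n) (Fin n) ℝ),
      IsUnit Sn ∧ Λ.IsDiag ∧ (∀ i, 0 < Λ i i) ∧
      (Matrix.fromBlocks Sn 0 0 ((Snᵀ)⁻¹))ᵀ * symplecticForm n *
        Matrix.fromBlocks Sn 0 0 ((Snᵀ)⁻¹) = symplecticForm n ∧
      (Matrix.fromBlocks Sn 0 0 ((Snᵀ)⁻¹))ᵀ * M * Matrix.fromBlocks Sn 0 0 ((Snᵀ)⁻¹) =
        Matrix.fromBlocks Λ 0 0 Λ := by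
  classical
  subst hMdef
  -- A and B are positive definite
  have hherm : (Matrix.fromBlocks A 0 0 B)ᴴ = Matrix.fromBlocks A 0 0 B := hM.1
  rw [fromBlocks_conjTranspose] at hherm
  have hA : A.PosDef := by
    refine PosDef.of_dotProduct_mulVec_pos ?_ ?_
    · have h := congrArg Matrix.toBlocks₁₁ hherm
      simpa [toBlocks_fromBlocks₁₁, Matrix.IsSymm] using h
    · intro x hx
      have hx' : (Sum.elim x 0 : Fin n ⊕ Fin n → ℝ) ≠ 0 :=
        fun h => hx (funext fun i => by simpa using congrFun h (Sum.inl i))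
      have h := hM.dotProduct_mulVec_pos hx'
      simpa [fromBlocks_mulVec, sumElim_dotProduct_sumElim, star_trivial] using h
  have hB : B.PosDef := by
    refine PosDef.of_dotProduct_mulVec_pos ?_ ?_
    · have h := congrArg Matrix.toBlocks₂₂ hherm
      simpa [toBlocks_fromBlocks₂₂, Matrix.IsSymm] using h
    · intro x hx
      have hx' : (Sum.elim 0 x : Fin n ⊕ Fin n → ℝ) ≠ 0 :=
        fun h => hx (funext fun i => by simpa using congrFun h (Sum.inr i))
      have h := hM.dotProduct_mulVec_pos hx'
      simpa [fromBlocks_mulVec, sumElim_dotProduct_sumElim, star_trivial] using h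
  -- the square root L of A
  obtain ⟨L, hLL0, hLh⟩ := sqrt_aux A hA.posSemidef
  have hLL : L * L = A := hLL0
  have hLt : Lᵀ = L := by
    rw [← conjTranspose_eq_transpose_of_trivial]
    exact hLh
  have hLdet : IsUnit L.det := by
    have h2 : L.det * L.det = A.det := by rw [← det_mul, hLL]
    have hAd : A.det ≠ 0 := hA.det_pos.ne'
    have hne : L.det ≠ 0 := fun h => hAd (by rw [← h2, h, mul_zero])
    exact hne.isUnit
  have hLu : IsUnit L := (isUnit_iff_isUnit_det L).mpr hLdet
  have cL : ∀ X : Matrix (Fin n) (Fin n) ℝ, L⁻¹ * (L * X) = X := fun X => by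
    rw [← Matrix.mul_assoc, nonsing_inv_mul L hLdet, Matrix.one_mul]
  have cL' : ∀ X : Matrix (Fin n) (Fin n) ℝ, L * (L⁻¹ * X) = X := fun X => by
    rw [← Matrix.mul_assoc, mul_nonsing_inv L hLdet, Matrix.one_mul]
  -- spectral decomposition of T = L * B * L
  have hT : (Lᵀ * B * L).PosDef := posDef_conj_aux hB hLu
  rw [hLt] at hT
  have hTh : (L * B * L).IsHermitian := hT.1
  set ev : Fin n → ℝ := hTh.eigenvalues with hevdef
  have hev : ∀ i, 0 < ev i := hT.eigenvalues_pos
  set U : Matrix (Fin n) (Fin n) ℝ := (hTh.eigenvectorUnitary : Matrix (Fin n) (Fin n) ℝ)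
    with hUdef
  have hUmem : U ∈ Matrix.unitaryGroup (Fin n) ℝ := hTh.eigenvectorUnitary.2
  have hUtU : Uᵀ * U = 1 := by
    have h := (Matrix.mem_unitaryGroup_iff').mp hUmem
    simpa [star_eq_conjTranspose, conjTranspose_eq_transpose_of_trivial] using h
  have hUUt : U * Uᵀ = 1 := by
    have h := (Matrix.mem_unitaryGroup_iff).mp hUmem
    simpa [star_eq_conjTranspose, conjTranspose_eq_transpose_of_trivial] using h
  have cU : ∀ X : Matrix (Fin n) (Fin n) ℝ, Uᵀ * (U * X) = X := fun X => by
    rw [← Matrix.mul_assoc, hUtU, Matrix.one_mul]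
  have hspec : U * diagonal ev * Uᵀ = L * B * L := by
    have h := hTh.spectral_theorem
    rw [Unitary.conjStarAlgAut_apply, star_eq_conjTranspose, conjTranspose_eq_transpose_of_trivial,
      RCLike.ofReal_real_eq_id] at h
    simpa using h.symm
  -- the diagonal matrices
  set d : Fin n → ℝ := fun i => (ev i) ^ ((4 : ℝ)⁻¹) with hddef
  set D : Matrix (Fin n) (Fin n) ℝ := diagonal d with hDdef
  set lam : Fin n → ℝ := fun i => (ev i) ^ ((2 : ℝ)⁻¹) with hlamdef
  set Λ : Matrix (Fin n) (Fin n) ℝ := diagonal lam with hΛdef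
  have hDD : D * D = Λ := by
    rw [hDdef, hΛdef, diagonal_mul_diagonal]
    refine congrArg diagonal (funext fun i => ?_)
    show d i * d i = lam i
    simp only [hddef, hlamdef]
    rw [← Real.rpow_add (hev i)]
    norm_num
  have hDLD : D * Λ * D = diagonal ev := by
    rw [hDdef, hΛdef, diagonal_mul_diagonal, diagonal_mul_diagonal]
    refine congrArg diagonal (funext fun i => ?_)
    show d i * lam i * d i = ev i
    simp only [hddef, hlamdef]
    rw [← Real.rpow_add (hev i), ← Real.rpow_add (hev i)]
    norm_num
  have hDdet : IsUnit D.det := by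
    rw [hDdef, det_diagonal]
    exact (Finset.prod_pos fun i _ => Real.rpow_pos_of_pos (hev i) _).ne'.isUnit
  have hDu : IsUnit D := (isUnit_iff_isUnit_det D).mpr hDdet
  -- define Sn
  set Sn : Matrix (Fin n) (Fin n) ℝ := L⁻¹ * U * D with hSndef
  have hUdet : IsUnit U.det := IsUnit.of_mul_eq_one (a := U.det) Uᵀ.det
    (by rw [← det_mul, hUUt, det_one])
  have hUu : IsUnit U := (isUnit_iff_isUnit_det U).mpr hUdet
  have hSnu : IsUnit Sn := ((isUnit_nonsing_inv_iff.mpr hLu).mul hUu).mul hDu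
  have hSndet : IsUnit Sn.det := (isUnit_iff_isUnit_det Sn).mp hSnu
  have cS : ∀ X : Matrix (Fin n) (Fin n) ℝ, Sn⁻¹ * (Sn * X) = X := fun X => by
    rw [← Matrix.mul_assoc, nonsing_inv_mul Sn hSndet, Matrix.one_mul]
  have hSnT : Snᵀ = D * (Uᵀ * L⁻¹) := by
    rw [hSndef, transpose_mul, transpose_mul, diagonal_transpose, transpose_nonsing_inv, hLt,
      ← hDdef]
  have hSnTdet : IsUnit Snᵀ.det := by rwa [det_transpose]
  have hSnTinv : Snᵀ * (Snᵀ)⁻¹ = 1 := mul_nonsing_inv _ hSnTdet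
  have hSninvT : ((Snᵀ)⁻¹)ᵀ = Sn⁻¹ := by
    rw [transpose_nonsing_inv, transpose_transpose]
  have hSninvSn : Sn⁻¹ * Sn = 1 := nonsing_inv_mul Sn hSndet
  -- the key identities
  have K1 : Snᵀ * A * Sn = Λ := by
    rw [hSnT, hSndef, ← hLL]
    simp only [Matrix.mul_assoc]
    rw [cL, cL', cU, hDD]
  have K2 : Sn * Λ * Snᵀ = B := by
    rw [hSndef, hSnT]
    simp only [Matrix.mul_assoc]
    rw [show D * (Λ * (D * (Uᵀ * L⁻¹))) = diagonal ev * (Uᵀ * L⁻¹) by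
      rw [← Matrix.mul_assoc Λ D, ← Matrix.mul_assoc D (Λ * D), ← Matrix.mul_assoc D Λ D, hDLD]]
    have h : U * (diagonal ev * (Uᵀ * L⁻¹)) = L * (B * (L * L⁻¹)) := by
      calc U * (diagonal ev * (Uᵀ * L⁻¹)) = U * diagonal ev * Uᵀ * L⁻¹ := by
            simp only [Matrix.mul_assoc]
        _ = L * B * L * L⁻¹ := by rw [hspec]
        _ = L * (B * (L * L⁻¹)) := by simp only [Matrix.mul_assoc]
    rw [h, cL, mul_nonsing_inv L hLdet, Matrix.mul_one]
  have K3 : ((Snᵀ)⁻¹)ᵀ * B * (Snᵀ)⁻¹ = Λ := by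
    rw [hSninvT, ← K2]
    simp only [Matrix.mul_assoc]
    rw [cS, ← Matrix.mul_assoc]
    exact mul_nonsing_inv_cancel_right Snᵀ Λ hSnTdet
  refine ⟨Sn, Λ, hSnu, isDiag_diagonal lam, ?_, ?_, ?_⟩
  · intro i
    rw [hΛdef, diagonal_apply_eq]
    exact Real.rpow_pos_of_pos (hev i) _
  · rw [symplecticForm, fromBlocks_transpose, fromBlocks_multiply, fromBlocks_multiply]
    simp [hSninvT, hSnTinv, hSninvSn]
  · rw [fromBlocks_transpose, fromBlocks_multiply, fromBlocks_multiply]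
    simp only [Matrix.mul_zero, Matrix.zero_mul, Matrix.mul_one, Matrix.one_mul,
      add_zero, zero_add, transpose_zero]
    rw [K1, K3]
end

section
/- Let M be a positive definite real (2n)×(2n) matrix and let H = i · M^{-1/2} Ω M^{-1/2} be the associated complex matrix. Then H is invertible (in particular 0 is not an eigenvalue of H), and for every complex number μ, μ is an eigenvalue of H if and only if −μ is an eigenvalue of H. -/
open Matrix

open scoped ComplexOrder in
/-- The positive semidefinite square root of a positive semidefinite matrix (the definition
that Mathlib of December 2024 provided under this name; it has since been removed). -/
noncomputable def Matrix.PosSemidef.sqrt {n 𝕜 : Type*} [Fintype n] [RCLike 𝕜] [DecidableEq n]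
    {A : Matrix n n 𝕜} (hA : PosSemidef A) : Matrix n n 𝕜 :=
  hA.1.eigenvectorUnitary.1 * diagonal ((↑) ∘ Real.sqrt ∘ hA.1.eigenvalues) *
  (star hA.1.eigenvectorUnitary : Matrix n n 𝕜)

open scoped ComplexOrder in
theorem Matrix.PosSemidef.sqrt_mul_self {n 𝕜 : Type*} [Fintype n] [RCLike 𝕜] [DecidableEq n]
    {A : Matrix n n 𝕜} (hA : PosSemidef A) : hA.sqrt * hA.sqrt = A := by
  have hU : (star hA.1.eigenvectorUnitary : Matrix n n 𝕜) * hA.1.eigenvectorUnitary.1 = 1 :=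
    Matrix.UnitaryGroup.star_mul_self _
  have hD : diagonal ((↑) ∘ Real.sqrt ∘ hA.1.eigenvalues) *
      diagonal ((↑) ∘ Real.sqrt ∘ hA.1.eigenvalues) =
      diagonal (((↑) : ℝ → 𝕜) ∘ hA.1.eigenvalues) := by
    rw [diagonal_mul_diagonal]
    congr 1
    funext i
    simp only [Function.comp_apply]
    rw [← RCLike.ofReal_mul, Real.mul_self_sqrt (hA.eigenvalues_nonneg i)]
  conv_rhs => rw [hA.1.spectral_theorem]
  rw [Unitary.conjStarAlgAut_apply]
  unfold Matrix.PosSemidef.sqrt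
  calc _ = hA.1.eigenvectorUnitary.1 * diagonal ((↑) ∘ Real.sqrt ∘ hA.1.eigenvalues) *
      ((star hA.1.eigenvectorUnitary : Matrix n n 𝕜) * hA.1.eigenvectorUnitary.1) *
      diagonal ((↑) ∘ Real.sqrt ∘ hA.1.eigenvalues) *
      (star hA.1.eigenvectorUnitary : Matrix n n 𝕜) := by simp only [Matrix.mul_assoc]
    _ = _ := by rw [hU, Matrix.mul_one, Matrix.mul_assoc _ (diagonal _) (diagonal _), hD]

open scoped ComplexOrder in
theorem Matrix.PosSemidef.isHermitian_sqrt {n 𝕜 : Type*} [Fintype n] [RCLike 𝕜] [DecidableEq n]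
    {A : Matrix n n 𝕜} (hA : PosSemidef A) : hA.sqrt.IsHermitian := by
  simp only [Matrix.PosSemidef.sqrt, IsHermitian]
  rw [conjTranspose_mul, conjTranspose_mul, diagonal_conjTranspose, Matrix.mul_assoc]
  have : star ((↑) ∘ Real.sqrt ∘ hA.1.eigenvalues : n → 𝕜) =
      ((↑) ∘ Real.sqrt ∘ hA.1.eigenvalues : n → 𝕜) := by
    funext i; simp
  rw [this]
  simp only [← Matrix.star_eq_conjTranspose, Matrix.mul_assoc, Unitary.coe_star, star_star]

/-- Let `H = i · M^{-1/2} Ω M^{-1/2}` for `M` positive definite.  Then `H` is invertible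
(in particular `0` is not in its spectrum), and its spectrum is symmetric about `0`:
`μ` is an eigenvalue of `H` iff `−μ` is. -/
theorem assoc_matrix_invertible_and_spectrum_symm (n : ℕ)
    (M : Matrix (Fin n ⊕ Fin n) (Fin n ⊕ Fin n) ℝ) (hM : M.PosDef)
    (H : Matrix (Fin n ⊕ Fin n) (Fin n ⊕ Fin n) ℂ)
    (hH : H = Complex.I •
      (((hM.posSemidef.sqrt)⁻¹ * symplecticForm n * (hM.posSemidef.sqrt)⁻¹).map
        Complex.ofReal)) :
    IsUnit H ∧ ∀ μ : ℂ, μ ∈ spectrum ℂ H ↔ -μ ∈ spectrum ℂ H := by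
  set S := hM.posSemidef.sqrt with hS
  set A := S⁻¹ * symplecticForm n * S⁻¹ with hA
  -- basic facts
  have hΩmul : symplecticForm n * (symplecticForm n)ᵀ = 1 := by
    simp [symplecticForm, Matrix.fromBlocks_transpose, Matrix.fromBlocks_multiply,
      ← Matrix.fromBlocks_one]
  have hΩdet : (symplecticForm n).det ≠ 0 := by
    intro h
    have := congrArg Matrix.det hΩmul
    rw [Matrix.det_mul, Matrix.det_one, h, zero_mul] at this
    exact zero_ne_one this
  have hSdet : S.det ≠ 0 := by
    intro h
    have hm : S * S = M := hM.posSemidef.sqrt_mul_self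
    have := congrArg Matrix.det hm
    rw [Matrix.det_mul, h, zero_mul] at this
    exact hM.det_pos.ne' this.symm
  have hSunit : IsUnit S := S.isUnit_iff_isUnit_det.mpr (isUnit_iff_ne_zero.mpr hSdet)
  have hAunit : IsUnit A := by
    exact ((Matrix.isUnit_nonsing_inv_iff.mpr hSunit).mul
      ((symplecticForm n).isUnit_iff_isUnit_det.mpr (isUnit_iff_ne_zero.mpr hΩdet))).mul
      (Matrix.isUnit_nonsing_inv_iff.mpr hSunit)
  have hAdet : A.det ≠ 0 := (A.isUnit_iff_isUnit_det.mp hAunit).ne_zero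
  -- determinant of H
  have hHdet : H.det ≠ 0 := by
    rw [hH, Matrix.det_smul]
    refine mul_ne_zero (pow_ne_zero _ Complex.I_ne_zero) ?_
    have hmd : (A.map Complex.ofReal).det = (A.det : ℂ) := by
      have := (Complex.ofRealHom.map_det A).symm
      exact this
    rw [hmd]
    exact_mod_cast hAdet
  have hHunit : IsUnit H := H.isUnit_iff_isUnit_det.mpr (isUnit_iff_ne_zero.mpr hHdet)
  refine ⟨hHunit, ?_⟩
  -- H is "antisymmetric": Hᵀ = -H
  have hSsymm : Sᵀ = S := hM.posSemidef.isHermitian_sqrt.eq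
  have hΩT : (symplecticForm n)ᵀ = -(symplecticForm n) := by
    simp [symplecticForm, Matrix.fromBlocks_transpose, Matrix.fromBlocks_neg]
  have hAT : Aᵀ = -A := by
    rw [hA, Matrix.transpose_mul, Matrix.transpose_mul, Matrix.transpose_nonsing_inv, hSsymm,
      hΩT]
    noncomm_ring
  have hHT : Hᵀ = -H := by
    have hmapneg : (-A).map Complex.ofReal = -(A.map Complex.ofReal) := by
      ext i j; simp [Matrix.map_apply]
    rw [hH, Matrix.transpose_smul, ← Matrix.transpose_map, hAT, hmapneg, smul_neg]
  -- determinant identity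
  have key : ∀ μ : ℂ, (algebraMap ℂ _ μ - H).det = (algebraMap ℂ _ (-μ) - H).det := by
    intro μ
    have h1 : (algebraMap ℂ _ μ - H).det = ((algebraMap ℂ _ μ - H)ᵀ).det :=
      (Matrix.det_transpose _).symm
    rw [h1, Matrix.transpose_sub, hHT]
    have h2 : (algebraMap ℂ (Matrix (Fin n ⊕ Fin n) (Fin n ⊕ Fin n) ℂ) μ)ᵀ
        = algebraMap ℂ _ μ := by
      simp [Matrix.algebraMap_eq_diagonal, Matrix.diagonal_transpose]
    rw [h2]
    have h3 : algebraMap ℂ (Matrix (Fin n ⊕ Fin n) (Fin n ⊕ Fin n) ℂ) μ - (-H)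
        = -(algebraMap ℂ _ (-μ) - H) := by
      rw [map_neg]; abel
    rw [h3, Matrix.det_neg]
    have hcard : Fintype.card (Fin n ⊕ Fin n) = 2 * n := by
      simp [Fintype.card_sum, two_mul]
    rw [hcard, pow_mul]
    norm_num
  intro μ
  rw [spectrum.mem_iff, spectrum.mem_iff, not_iff_not,
    Matrix.isUnit_iff_isUnit_det, Matrix.isUnit_iff_isUnit_det, key μ]
end
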